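/- Let G be a d-regular simple graph on n vertices with 1 ≤ d and d/n < 1/2, with adjacency-matrix eigenvalues λ₁ ≥ λ₂ ≥ ⋯ ≥ λₙ satisfying λ₂ ≥ 0, and set p = d/n. Then (λ₂ + p)² ≥ (1 − 2p)·|λₙ| + p². -/

import Mathlib

open Matrix SimpleGraph Finset

private lemma eigvec_sum_sq (n : ℕ) (A : Matrix (Fin n) (Fin n) ℝ) (hA : A.IsHermitian)
    (k : Fin n) : ∑ j, (hA.eigenvectorBasis k) j ^ 2 = 1 := by
  have h1 : ‖hA.eigenvectorBasis k‖ = 1 := hA.eigenvectorBasis.orthonormal.1 k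
  have h2 := EuclideanSpace.norm_eq (hA.eigenvectorBasis k)
  rw [h1] at h2
  have h3 : ∑ j, ‖(hA.eigenvectorBasis k) j‖ ^ 2 = 1 := Real.sqrt_eq_one.mp h2.symm
  simpa [Real.norm_eq_abs, sq_abs] using h3

private lemma adj_eig_abs_le (n d : ℕ) (hn : 1 ≤ n) (G : SimpleGraph (Fin n))
    [DecidableRel G.Adj] (hreg : G.IsRegularOfDegree d)
    (hA : (G.adjMatrix ℝ).IsHermitian) (i : Fin n) :
    |hA.eigenvalues i| ≤ (d : ℝ) := by
  set v : Fin n → ℝ := ⇑(hA.eigenvectorBasis i) with hv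
  have hmv : (G.adjMatrix ℝ) *ᵥ v = hA.eigenvalues i • v := hA.mulVec_eigenvectorBasis i
  have hnorm : ∑ j, v j ^ 2 = 1 := eigvec_sum_sq n _ hA i
  obtain ⟨j0, -, hj0⟩ := Finset.exists_max_image (Finset.univ : Finset (Fin n))
    (fun j => |v j|) ⟨⟨0, by omega⟩, Finset.mem_univ _⟩
  have hpos : 0 < |v j0| := by
    rcases (abs_nonneg (v j0)).lt_or_eq with h | h
    · exact h
    · exfalso
      have hz : ∀ j, v j = 0 := fun j =>
        abs_eq_zero.mp (le_antisymm (h ▸ hj0 j (Finset.mem_univ _)) (abs_nonneg _))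
      simp [hz] at hnorm
  have key : |hA.eigenvalues i| * |v j0| ≤ (d : ℝ) * |v j0| := by
    have h1 : (G.adjMatrix ℝ *ᵥ v) j0 = ∑ u ∈ G.neighborFinset j0, v u :=
      SimpleGraph.adjMatrix_mulVec_apply _ _ _
    have h2 : hA.eigenvalues i * v j0 = ∑ u ∈ G.neighborFinset j0, v u := by
      rw [← h1, hmv]; simp
    calc |hA.eigenvalues i| * |v j0| = |∑ u ∈ G.neighborFinset j0, v u| := by
          rw [← abs_mul, h2]
      _ ≤ ∑ u ∈ G.neighborFinset j0, |v u| := Finset.abs_sum_le_sum_abs _ _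
      _ ≤ ∑ _u ∈ G.neighborFinset j0, |v j0| :=
          Finset.sum_le_sum fun u _ => hj0 u (Finset.mem_univ _)
      _ = (G.degree j0 : ℝ) * |v j0| := by
          rw [Finset.sum_const, SimpleGraph.card_neighborFinset_eq_degree]; simp
      _ = (d : ℝ) * |v j0| := by rw [hreg j0]
  exact le_of_mul_le_mul_right key hpos

set_option maxHeartbeats 2000000 in
/-- Let `G` be a `d`-regular simple graph on `n ≥ 2` vertices with
`1 ≤ d` and `d/n < 1/2`, with adjacency-matrix eigenvalues listed in decreasing order
as `μ` and satisfying `λ₂ = μ 1 ≥ 0`, and set `p = d/n`. Then, with `λₙ = μ (n-1)`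
the smallest eigenvalue, `(λ₂ + p)² ≥ (1 − 2p)·|λₙ| + p²`. -/
theorem stmt_13 (n d : ℕ) (hn : 2 ≤ n) (hd : 1 ≤ d)
    (G : SimpleGraph (Fin n)) [DecidableRel G.Adj]
    (hreg : G.IsRegularOfDegree d)
    (hA : (G.adjMatrix ℝ).IsHermitian)
    (μ : Fin n → ℝ) (hμ : Antitone μ)
    (hperm : ∃ σ : Equiv.Perm (Fin n), μ = hA.eigenvalues ∘ σ)
    (hmu2 : 0 ≤ μ ⟨1, by omega⟩)
    (p : ℝ) (hp : p = (d : ℝ) / n) (hphalf : p < 1 / 2) :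
    (μ ⟨1, by omega⟩ + p) ^ 2 ≥ (1 - 2 * p) * |μ ⟨n - 1, by omega⟩| + p ^ 2 := by
  classical
  obtain ⟨σ, hσ⟩ := hperm
  set A : Matrix (Fin n) (Fin n) ℝ := G.adjMatrix ℝ with hAdef
  set lam : Fin n → ℝ := hA.eigenvalues with hlamdef
  have hn0 : (0:ℝ) < n := by positivity
  set i1 : Fin n := ⟨1, by omega⟩ with hi1
  set iL : Fin n := ⟨n - 1, by omega⟩ with hiL
  set s : ℝ := μ i1 with hs
  set m : ℝ := μ iL with hm
  have hbound : ∀ i, |lam i| ≤ (d : ℝ) := fun i => adj_eig_abs_le n d (by omega) G hreg hA i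
  have hlamle : ∀ i, lam i ≤ (d : ℝ) := fun i => (abs_le.mp (hbound i)).2
  have hμval : ∀ j : Fin n, μ j = lam (σ j) := fun j => by rw [hσ]; rfl
  have htrace : ∑ i, lam i = 0 := by
    have h1 : A.trace = ∑ i, lam i := by
      nth_rewrite 1 [hA.spectral_theorem]
      rw [Unitary.conjStarAlgAut_apply, Matrix.trace_mul_comm, ← Matrix.mul_assoc]
      have h2 : (star (hA.eigenvectorUnitary : Matrix (Fin n) (Fin n) ℝ)) *
          (hA.eigenvectorUnitary : Matrix (Fin n) (Fin n) ℝ) = 1 :=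
        hA.eigenvectorUnitary.2.1
      rw [h2, Matrix.one_mul, Matrix.trace_diagonal]
      simp [hlamdef]
    have h3 : A.trace = 0 := by simp [hAdef]
    rw [← h1, h3]
  have hmle : ∀ j : Fin n, m ≤ μ j := by
    intro j
    exact hμ (by rw [Fin.le_def]; simp [hiL]; omega)
  have hm0 : m ≤ 0 := by
    have h1 : (n : ℝ) * m ≤ ∑ j, μ j := by
      calc (n : ℝ) * m = ∑ _j : Fin n, m := by simp [mul_comm]
        _ ≤ ∑ j, μ j := Finset.sum_le_sum fun j _ => hmle j
    have h2 : ∑ j, μ j = 0 := by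
      rw [hσ]
      have h3 := Equiv.sum_comp σ lam
      simpa using h3.trans htrace
    nlinarith
  have hs_le : s ≤ (d : ℝ) := by
    rw [hs, hμval i1]; exact hlamle _
  -- the orthogonal matrix of eigenvectors
  set V : Matrix (Fin n) (Fin n) ℝ := (hA.eigenvectorUnitary : Matrix (Fin n) (Fin n) ℝ)
    with hVdef
  have hstarV : star V = Vᵀ := by
    ext i j; simp [Matrix.star_apply, Matrix.transpose_apply]
  have hVtV : Vᵀ * V = 1 := by
    rw [← hstarV]; exact hA.eigenvectorUnitary.2.1
  have hVVt : V * Vᵀ = 1 := by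
    rw [← hstarV]; exact hA.eigenvectorUnitary.2.2
  have hAspec : A = V * Matrix.diagonal lam * Vᵀ := by
    have h := hA.spectral_theorem
    rw [Unitary.conjStarAlgAut_apply, ← hVdef, hstarV] at h
    convert h using 2
    all_goals rfl
  -- dot product transfer
  have hdot : ∀ v w : Fin n → ℝ, v ⬝ᵥ (V *ᵥ w) = (Vᵀ *ᵥ v) ⬝ᵥ w := by
    intro v w
    rw [Matrix.dotProduct_mulVec, Matrix.mulVec_transpose]
  have hdotV : ∀ v w : Fin n → ℝ, (Vᵀ *ᵥ v) ⬝ᵥ (Vᵀ *ᵥ w) = v ⬝ᵥ w := by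
    intro v w
    rw [Matrix.dotProduct_mulVec, Matrix.vecMul_transpose, Matrix.mulVec_mulVec, hVVt,
      Matrix.one_mulVec]
  -- quadratic form of A in eigencoordinates
  have hquad : ∀ w : Fin n → ℝ, w ⬝ᵥ (A *ᵥ w) = ∑ i, lam i * ((Vᵀ *ᵥ w) i) ^ 2 := by
    intro w
    rw [hAspec, ← Matrix.mulVec_mulVec, ← Matrix.mulVec_mulVec, hdot]
    simp only [Matrix.mulVec_diagonal, dotProduct]
    exact Finset.sum_congr rfl fun i _ => by ring
  have hAone : A *ᵥ (fun _ => (1:ℝ)) = fun _ => (d : ℝ) := by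
    funext v
    rw [hAdef, SimpleGraph.adjMatrix_mulVec_apply]
    simp [hreg v]
  set e : Fin n → ℝ := Vᵀ *ᵥ (fun _ => (1:ℝ)) with hedef
  have he2 : ∑ i, e i * e i = (n : ℝ) := by
    have h1 := hdotV (fun _ => (1:ℝ)) (fun _ => (1:ℝ))
    simp only [dotProduct] at h1
    calc ∑ i, e i * e i = ∑ _x : Fin n, (1:ℝ) * 1 := h1
      _ = n := by simp
  have heig : ∀ i, lam i * e i = (d : ℝ) * e i := by
    have hMA : Vᵀ * A = Matrix.diagonal lam * Vᵀ := by
      rw [hAspec, ← Matrix.mul_assoc, ← Matrix.mul_assoc, hVtV, Matrix.one_mul]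
    have h1 : Vᵀ *ᵥ (A *ᵥ (fun _ => (1:ℝ))) = Matrix.diagonal lam *ᵥ e := by
      rw [Matrix.mulVec_mulVec, hMA, ← Matrix.mulVec_mulVec]
    rw [hAone] at h1
    intro i
    have h2 := congrFun h1 i
    simp only [Matrix.mulVec_diagonal] at h2
    have h3 : (Vᵀ *ᵥ (fun _ => (d:ℝ))) i = (d : ℝ) * e i := by
      have h4 : (fun _ : Fin n => (d:ℝ)) = ((d:ℝ) • (fun _ : Fin n => (1:ℝ)) : Fin n → ℝ) := by
        funext _; simp
      rw [h4, Matrix.mulVec_smul]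
      simp [hedef]
    rw [h3] at h2
    rw [← h2]
  -- the PSD matrix N
  set β : ℝ := ((d : ℝ) - s) / n with hβ
  set N : Matrix (Fin n) (Fin n) ℝ :=
    Matrix.of (fun i j => (if i = j then s else 0) + β - A i j) with hNdef
  have hAsymm : ∀ i j, A j i = A i j := by
    intro i j
    simp [hAdef, SimpleGraph.adjMatrix_apply, SimpleGraph.adj_comm]
  have hNsymm : ∀ i j, N j i = N i j := by
    intro i j
    simp only [hNdef, Matrix.of_apply]
    rw [hAsymm i j]
    congr 2
    simp [eq_comm]
  -- quadratic form of N
  have hNform : ∀ w : Fin n → ℝ,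
      w ⬝ᵥ (N *ᵥ w) = s * (∑ i, w i * w i) + β * (∑ i, w i) ^ 2 - w ⬝ᵥ (A *ᵥ w) := by
    intro w
    have hL : w ⬝ᵥ (N *ᵥ w)
        = ∑ i, ∑ j, (w i * (((if i = j then s else 0) + β - A i j) * w j)) := by
      simp only [dotProduct, Matrix.mulVec, hNdef, Matrix.of_apply, Finset.mul_sum]
    have hR : w ⬝ᵥ (A *ᵥ w) = ∑ i, ∑ j, w i * (A i j * w j) := by
      simp only [dotProduct, Matrix.mulVec, Finset.mul_sum]
    rw [hL, hR]
    have hterm : ∀ i j, w i * (((if i = j then s else 0) + β - A i j) * w j)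
        = (if i = j then s * (w i * w j) else 0) + β * (w i * w j) - w i * (A i j * w j) := by
      intro i j; split <;> ring
    rw [Finset.sum_congr rfl fun i _ => Finset.sum_congr rfl fun j _ => hterm i j]
    have hrow : ∀ i, ∑ j, ((if i = j then s * (w i * w j) else 0) + β * (w i * w j)
          - w i * (A i j * w j))
        = s * (w i * w i) + β * (w i * ∑ j, w j) - ∑ j, w i * (A i j * w j) := by
      intro i
      rw [Finset.sum_sub_distrib, Finset.sum_add_distrib, Finset.sum_ite_eq]
      simp [Finset.mul_sum]
    rw [Finset.sum_congr rfl fun i _ => hrow i]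
    rw [Finset.sum_sub_distrib, Finset.sum_add_distrib, ← Finset.mul_sum, ← Finset.mul_sum,
      ← Finset.sum_mul]
    ring
  -- N is positive semidefinite
  have hNpsd : N.PosSemidef := by
    apply Matrix.PosSemidef.of_dotProduct_mulVec_nonneg
    · rw [Matrix.IsHermitian, Matrix.conjTranspose_eq_transpose_of_trivial]
      ext i j
      rw [Matrix.transpose_apply]
      exact hNsymm i j
    · intro w
      have hsw : star w = w := by funext i; simp
      rw [hsw]
      set c : Fin n → ℝ := Vᵀ *ᵥ w with hc
      have hkey : w ⬝ᵥ (N *ᵥ w)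
          = ∑ i, (s - lam i) * (c i) ^ 2 + β * (∑ i, e i * c i) ^ 2 := by
        rw [hNform, hquad]
        have hw2 : ∑ i, w i * w i = ∑ i, (c i) ^ 2 := by
          have h1 := hdotV w w
          simp only [dotProduct] at h1
          rw [← h1]
          exact Finset.sum_congr rfl fun i _ => (sq (c i)).symm
        have hws : ∑ i, w i = ∑ i, e i * c i := by
          have h1 := hdotV (fun _ => (1:ℝ)) w
          simp only [dotProduct, one_mul] at h1
          exact h1.symm
        rw [hw2, hws]
        rw [show ∑ i, (s - lam i) * c i ^ 2 = ∑ i, (s * c i ^ 2 - lam i * c i ^ 2) from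
          Finset.sum_congr rfl fun i _ => by ring]
        rw [Finset.sum_sub_distrib, ← Finset.mul_sum]
        ring
      rw [hkey]
      rcases le_or_gt (d : ℝ) s with hds | hds
      · -- case s ≥ d
        have hβ0 : β ≤ 0 := by
          rw [hβ]
          apply div_nonpos_of_nonpos_of_nonneg <;> nlinarith
        set S : Finset (Fin n) := Finset.univ.filter (fun i => e i ≠ 0) with hS
        have hlamS : ∀ i ∈ S, lam i = (d:ℝ) := by
          intro i hi
          rw [hS, Finset.mem_filter] at hi
          exact mul_right_cancel₀ hi.2 (heig i)
        have hsum_eS : ∑ i, e i * c i = ∑ i ∈ S, e i * c i := by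
          symm
          apply Finset.sum_filter_of_ne
          intro i _ hne h0
          exact hne (by rw [h0, zero_mul])
        have hCS : (∑ i, e i * c i) ^ 2 ≤ (n : ℝ) * ∑ i ∈ S, (c i) ^ 2 := by
          rw [hsum_eS]
          calc (∑ i ∈ S, e i * c i) ^ 2 ≤ (∑ i ∈ S, (e i)^2) * (∑ i ∈ S, (c i)^2) :=
                Finset.sum_mul_sq_le_sq_mul_sq S e c
            _ ≤ (n:ℝ) * ∑ i ∈ S, (c i)^2 := by
                apply mul_le_mul_of_nonneg_right _ (Finset.sum_nonneg fun i _ => sq_nonneg _)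
                rw [← he2]
                calc ∑ i ∈ S, (e i)^2 ≤ ∑ i, (e i)^2 :=
                      Finset.sum_le_sum_of_subset_of_nonneg (Finset.filter_subset _ _)
                        (fun i _ _ => sq_nonneg _)
                  _ = ∑ i, e i * e i := Finset.sum_congr rfl fun i _ => sq (e i)
        have h2 : β * ((n:ℝ) * ∑ i ∈ S, (c i) ^ 2) ≤ β * (∑ i, e i * c i) ^ 2 :=
          mul_le_mul_of_nonpos_left hCS hβ0
        have h3 : ∑ i ∈ S, (s - lam i) * (c i) ^ 2 ≤ ∑ i, (s - lam i) * (c i) ^ 2 :=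
          Finset.sum_le_sum_of_subset_of_nonneg (Finset.filter_subset _ _)
            (fun i _ _ => mul_nonneg (by linarith [hlamle i]) (sq_nonneg _))
        have h4 : ∑ i ∈ S, (s - lam i) * (c i) ^ 2 = (s - d) * ∑ i ∈ S, (c i)^2 := by
          rw [Finset.mul_sum]
          exact Finset.sum_congr rfl fun i hi => by rw [hlamS i hi]
        have h6 : β * ((n:ℝ) * ∑ i ∈ S, (c i)^2) = ((d:ℝ) - s) * ∑ i ∈ S, (c i)^2 := by
          have h5 : β * (n:ℝ) = (d:ℝ) - s := by
            rw [hβ]; field_simp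
          rw [← h5]; ring
        linarith [h2, h3, h4.ge, h4.le, h6.ge, h6.le]
      · -- case s < d
        set i0 : Fin n := σ ⟨0, by omega⟩ with hi0
        have hlams : ∀ i, i ≠ i0 → lam i ≤ s := by
          intro i hi
          have h1 : lam i = μ (σ.symm i) := by rw [hμval (σ.symm i)]; simp
          rw [h1, hs]
          apply hμ
          rw [Fin.le_def]
          have h2 : σ.symm i ≠ ⟨0, by omega⟩ := by
            intro h
            apply hi
            rw [hi0, ← h]; simp
          have h3 : (σ.symm i : ℕ) ≠ 0 := by
            intro h
            exact h2 (by ext; simpa using h)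
          simp [hi1]
          omega
        have hez : ∀ i, i ≠ i0 → e i = 0 := by
          intro i hi
          by_contra hne
          have h2 : lam i = (d:ℝ) := mul_right_cancel₀ hne (heig i)
          have h3 := hlams i hi
          rw [h2] at h3
          linarith
        have hsum_ec : ∑ i, e i * c i = e i0 * c i0 :=
          Finset.sum_eq_single i0 (fun b _ hb => by rw [hez b hb, zero_mul])
            (fun h => absurd (Finset.mem_univ _) h)
        have he2' : e i0 * e i0 = (n : ℝ) := by
          rw [← he2]
          symm
          exact Finset.sum_eq_single i0 (fun b _ hb => by rw [hez b hb]; ring)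
            (fun h => absurd (Finset.mem_univ _) h)
        have hsplit : ∑ i, (s - lam i) * (c i) ^ 2
            = ∑ i ∈ Finset.univ.erase i0, (s - lam i) * (c i)^2
              + (s - lam i0) * (c i0)^2 :=
          (Finset.sum_erase_add Finset.univ _ (Finset.mem_univ i0)).symm
        have hrest : 0 ≤ ∑ i ∈ Finset.univ.erase i0, (s - lam i) * (c i) ^ 2 :=
          Finset.sum_nonneg fun i hi =>
            mul_nonneg (by linarith [hlams i (Finset.ne_of_mem_erase hi)]) (sq_nonneg _)
        have hβval : β * (∑ i, e i * c i) ^ 2 = ((d:ℝ) - s) * (c i0) ^ 2 := by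
          rw [hsum_ec]
          have : (e i0 * c i0)^2 = (e i0 * e i0) * (c i0)^2 := by ring
          rw [this, he2', hβ]
          have hne : (n:ℝ) ≠ 0 := ne_of_gt hn0
          field_simp
        rw [hsplit, hβval]
        have hlami0 : lam i0 ≤ (d : ℝ) := hlamle i0
        have hfin : 0 ≤ ((d:ℝ) - lam i0) * (c i0)^2 :=
          mul_nonneg (by linarith) (sq_nonneg _)
        have hring : (s - lam i0) * (c i0)^2 + ((d:ℝ) - s) * (c i0)^2
            = ((d:ℝ) - lam i0) * (c i0)^2 := by ring
        linarith [hrest, hfin, hring.ge, hring.le]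
  -- the eigenvector x of m
  set k : Fin n := σ iL with hk
  set x : Fin n → ℝ := ⇑(hA.eigenvectorBasis k) with hx
  have hmk : m = lam k := by rw [hm, hμval iL]
  have hxeig : A *ᵥ x = m • x := by
    rw [hmk]; exact hA.mulVec_eigenvectorBasis k
  have hx2 : ∑ i, x i ^ 2 = 1 := eigvec_sum_sq n _ hA k
  have hxsum : ∑ i, x i = 0 := by
    have h1 : ∑ i, (A *ᵥ x) i = (d : ℝ) * ∑ i, x i := by
      simp only [Matrix.mulVec, dotProduct]
      rw [Finset.sum_comm]
      have h2 : ∀ j, ∑ i, A i j * x j = (d:ℝ) * x j := by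
        intro j
        rw [← Finset.sum_mul]
        congr 1
        have h3 : ∑ i, A i j = ∑ i, A j i := Finset.sum_congr rfl fun i _ => hAsymm j i
        rw [h3]
        have h4 := congrFun hAone j
        simp only [Matrix.mulVec, dotProduct] at h4
        simpa using h4
      rw [Finset.sum_congr rfl fun j _ => h2 j, ← Finset.mul_sum]
    have h5 : ∑ i, (m • x) i = m * ∑ i, x i := by
      simp [Finset.mul_sum]
    rw [hxeig, h5] at h1
    have h6 : ((d : ℝ) - m) * (∑ i, x i) = 0 := by linarith
    have h7 : (d : ℝ) - m ≠ 0 := by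
      have : (1:ℝ) ≤ d := by exact_mod_cast hd
      nlinarith
    exact (mul_eq_zero.mp h6).resolve_left h7
  -- trace quantities
  set D : Matrix (Fin n) (Fin n) ℝ := Matrix.diagonal x with hD
  have hgroup : N * D * N * D = (N * D) * (N * D) := Matrix.mul_assoc _ _ _
  have htrval : (N * D * N * D).trace = ∑ i, ∑ j, (N i j * x j) * (N j i * x i) := by
    rw [hgroup, Matrix.trace]
    apply Finset.sum_congr rfl
    intro i _
    rw [Matrix.diag_apply, Matrix.mul_apply]
    apply Finset.sum_congr rfl
    intro j _
    rw [hD, Matrix.mul_diagonal, Matrix.mul_diagonal]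
  have hpoint : ∀ i j, (N i j * x j) * (N j i * x i)
      = (s^2 + 2*s*β) * (if i = j then x i * x j else 0) + β^2 * (x i * x j)
        + (1 - 2*β) * (A i j * (x i * x j)) := by
    intro i j
    by_cases hij : i = j
    · subst hij
      have hAii : A i i = 0 := by simp [hAdef]
      have hNii : N i i = s + β := by simp [hNdef, hAii]
      rw [hNii, hAii, if_pos rfl]
      ring
    · have hNij : N i j = β - A i j := by simp [hNdef, hij]
      have hNji : N j i = β - A i j := by rw [hNsymm i j]; exact hNij
      rw [hNij, hNji, if_neg hij]
      have hA01 : A i j = 0 ∨ A i j = 1 := by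
        simp only [hAdef, SimpleGraph.adjMatrix_apply]
        split <;> simp
      rcases hA01 with h | h <;> rw [h] <;> ring
  have hsum1 : ∑ i, ∑ j, (if i = j then x i * x j else 0) = (1:ℝ) := by
    have h1 : ∀ i, ∑ j, (if i = j then x i * x j else 0) = x i * x i := by
      intro i
      rw [Finset.sum_ite_eq]
      simp
    rw [Finset.sum_congr rfl fun i _ => h1 i, ← hx2]
    exact Finset.sum_congr rfl fun i _ => (sq (x i)).symm
  have hsum2 : ∑ i, ∑ j, (x i * x j) = 0 := by
    have h1 : ∀ i, ∑ j, x i * x j = x i * ∑ j, x j := fun i => (Finset.mul_sum _ _ _).symm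
    rw [Finset.sum_congr rfl fun i _ => h1 i, hxsum]
    simp
  have hsum3 : ∑ i, ∑ j, A i j * (x i * x j) = m := by
    have h1 : x ⬝ᵥ (A *ᵥ x) = m := by
      rw [hxeig]
      simp only [dotProduct, Pi.smul_apply, smul_eq_mul]
      calc ∑ i, x i * (m * x i) = m * ∑ i, x i ^ 2 := by
            rw [Finset.mul_sum]; exact Finset.sum_congr rfl fun i _ => by ring
        _ = m := by rw [hx2, mul_one]
    rw [← h1]
    simp only [dotProduct, Matrix.mulVec, Finset.mul_sum]
    exact Finset.sum_congr rfl fun i _ => Finset.sum_congr rfl fun j _ => by ring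
  have hTval : (N * D * N * D).trace = s^2 + 2*s*β + (1 - 2*β)*m := by
    rw [htrval]
    rw [Finset.sum_congr rfl fun i _ => Finset.sum_congr rfl fun j _ => hpoint i j]
    have hsplit2 : ∀ i, ∑ j, ((s^2 + 2*s*β) * (if i = j then x i * x j else 0)
          + β^2 * (x i * x j) + (1 - 2*β) * (A i j * (x i * x j)))
        = (s^2 + 2*s*β) * (∑ j, (if i = j then x i * x j else 0))
          + β^2 * (∑ j, x i * x j) + (1 - 2*β) * (∑ j, A i j * (x i * x j)) := by
      intro i
      rw [Finset.sum_add_distrib, Finset.sum_add_distrib, Finset.mul_sum, Finset.mul_sum,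
        Finset.mul_sum]
    have houter : ∑ i, ((s^2 + 2*s*β) * (∑ j, (if i = j then x i * x j else 0))
          + β^2 * (∑ j, x i * x j) + (1 - 2*β) * (∑ j, A i j * (x i * x j)))
        = (s^2 + 2*s*β) * (∑ i, ∑ j, (if i = j then x i * x j else 0))
          + β^2 * (∑ i, ∑ j, x i * x j) + (1 - 2*β) * (∑ i, ∑ j, A i j * (x i * x j)) := by
      conv_rhs => rw [Finset.mul_sum, Finset.mul_sum, Finset.mul_sum]
      rw [Finset.sum_add_distrib, Finset.sum_add_distrib]
    rw [Finset.sum_congr rfl fun i _ => hsplit2 i, houter, hsum1, hsum2, hsum3]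
    ring
  -- positivity of the trace via the square root of N
  open MatrixOrder in have hRmul : CFC.sqrt N * CFC.sqrt N = N := CFC.sqrt_mul_sqrt_self N (Matrix.nonneg_iff_posSemidef.mpr hNpsd)
  open MatrixOrder in set R : Matrix (Fin n) (Fin n) ℝ := CFC.sqrt N with hRdef
  have hRsym : Rᵀ = R := by
    calc Rᵀ = Rᴴ := (Matrix.conjTranspose_eq_transpose_of_trivial R).symm
      _ = R := by
        open MatrixOrder in exact (Matrix.nonneg_iff_posSemidef.mp (CFC.sqrt_nonneg N)).1
  set K : Matrix (Fin n) (Fin n) ℝ := R * D * R with hK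
  have hDsym : Dᵀ = D := by rw [hD, Matrix.diagonal_transpose]
  have hKsym : Kᵀ = K := by
    rw [hK, Matrix.transpose_mul, Matrix.transpose_mul, hRsym, hDsym, Matrix.mul_assoc]
  have htr_eq : (N * D * N * D).trace = (K * K).trace := by
    have h1 : N * D * N * D = R * (R * D * (R * (R * D))) := by
      rw [← hRmul]; simp only [Matrix.mul_assoc]
    have h2 : (R * D * (R * (R * D))) * R = K * K := by
      simp only [hK, Matrix.mul_assoc]
    rw [h1, Matrix.trace_mul_comm, h2]
  have hTnn : 0 ≤ (N * D * N * D).trace := by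
    rw [htr_eq, Matrix.trace]
    apply Finset.sum_nonneg
    intro i _
    rw [Matrix.diag_apply, Matrix.mul_apply]
    apply Finset.sum_nonneg
    intro j _
    have h1 : K j i = K i j := by
      conv_lhs => rw [← hKsym, Matrix.transpose_apply]
    rw [h1]
    exact mul_self_nonneg _
  -- conclusion
  have hkey : 0 ≤ s^2 + 2*s*β + (1 - 2*β)*m := by rw [← hTval]; exact hTnn
  rw [ge_iff_le, abs_of_nonpos hm0]
  have hpβ : p - β = s / n := by rw [hp, hβ]; ring
  have h2 : 0 ≤ (p - β) * (s - m) := by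
    apply mul_nonneg
    · rw [hpβ]
      exact div_nonneg hmu2 (le_of_lt hn0)
    · linarith
  nlinarith [hkey, h2]
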